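/- Let γ be a 6×6 real symmetric matrix with diagonal blocks λᵢ·I (λᵢ ≥ 1) and diagonal off-diagonal blocks D_{ij}, satisfying γ J₃ γ = J₃ and γ ≥ 0. Then for every permutation (i,j,k) of (1,2,3), the strict inequality λ_k < λ_i + λ_j + 1 holds. -/

import Mathlib

open Matrix

/-- The 2×2 standard symplectic form. -/
noncomputable def J2x2 : Matrix (Fin 2) (Fin 2) ℝ := !![0, -1; 1, 0]

/-- The 6×6 matrix with 2×2 diagonal blocks `λᵢ·I` and off-diagonal blocks
`D₁₂, D₁₃, D₂₃`, indexed by `Fin 3 × Fin 2` (mode, quadrature). -/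
noncomputable def threeModeCM (l₁ l₂ l₃ : ℝ) (D₁₂ D₁₃ D₂₃ : Matrix (Fin 2) (Fin 2) ℝ) :
    Matrix (Fin 3 × Fin 2) (Fin 3 × Fin 2) ℝ :=
  fun p q =>
    (![![l₁ • (1 : Matrix (Fin 2) (Fin 2) ℝ), D₁₂, D₁₃],
       ![D₁₂ᵀ, l₂ • 1, D₂₃],
       ![D₁₃ᵀ, D₂₃ᵀ, l₃ • 1]] p.1 q.1) p.2 q.2

/-- `J₃ = J ⊕ J ⊕ J` on the mode-ordered basis. -/
noncomputable def J₃ : Matrix (Fin 3 × Fin 2) (Fin 3 × Fin 2) ℝ :=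
  fun p q => if p.1 = q.1 then J2x2 p.2 q.2 else 0

set_option maxHeartbeats 2000000 in
theorem stmt_4 (l₁ l₂ l₃ : ℝ) (h₁ : 1 ≤ l₁) (h₂ : 1 ≤ l₂) (h₃ : 1 ≤ l₃)
    (D₁₂ D₁₃ D₂₃ : Matrix (Fin 2) (Fin 2) ℝ)
    (hD₁₂ : D₁₂.IsDiag) (hD₁₃ : D₁₃.IsDiag) (hD₂₃ : D₂₃.IsDiag)
    (γ : Matrix (Fin 3 × Fin 2) (Fin 3 × Fin 2) ℝ)
    (hγ : γ = threeModeCM l₁ l₂ l₃ D₁₂ D₁₃ D₂₃)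
    (hpure : γ * J₃ * γ = J₃) (hpos : γ.PosSemidef) :
    l₁ < l₂ + l₃ + 1 ∧ l₂ < l₁ + l₃ + 1 ∧ l₃ < l₁ + l₂ + 1 := by
  subst hγ
  have z12 := hD₁₂ (show (0:Fin 2) ≠ 1 by decide)
  have z12' := hD₁₂ (show (1:Fin 2) ≠ 0 by decide)
  have z13 := hD₁₃ (show (0:Fin 2) ≠ 1 by decide)
  have z13' := hD₁₃ (show (1:Fin 2) ≠ 0 by decide)
  have z23 := hD₂₃ (show (0:Fin 2) ≠ 1 by decide)
  have z23' := hD₂₃ (show (1:Fin 2) ≠ 0 by decide)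
  -- purity equations
  have e1 := congrFun (congrFun hpure ((0:Fin 3),(0:Fin 2))) ((0:Fin 3),(1:Fin 2))
  have e2 := congrFun (congrFun hpure ((1:Fin 3),(0:Fin 2))) ((1:Fin 3),(1:Fin 2))
  have e3 := congrFun (congrFun hpure ((2:Fin 3),(0:Fin 2))) ((2:Fin 3),(1:Fin 2))
  simp [Matrix.mul_apply, Fintype.sum_prod_type, Fin.sum_univ_succ, threeModeCM, J₃, J2x2,
    Matrix.one_apply, Matrix.transpose_apply, z12, z12', z13, z13', z23, z23'] at e1 e2 e3
  -- positivity instances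
  have p12a := hpos.dotProduct_mulVec_nonneg (fun p => if p = ((0:Fin 3),(0:Fin 2)) then D₁₂ 0 0 else
    if p = ((1:Fin 3),(0:Fin 2)) then -l₁ else 0)
  have p12b := hpos.dotProduct_mulVec_nonneg (fun p => if p = ((0:Fin 3),(1:Fin 2)) then D₁₂ 1 1 else
    if p = ((1:Fin 3),(1:Fin 2)) then -l₁ else 0)
  have p13a := hpos.dotProduct_mulVec_nonneg (fun p => if p = ((0:Fin 3),(0:Fin 2)) then D₁₃ 0 0 else
    if p = ((2:Fin 3),(0:Fin 2)) then -l₁ else 0)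
  have p13b := hpos.dotProduct_mulVec_nonneg (fun p => if p = ((0:Fin 3),(1:Fin 2)) then D₁₃ 1 1 else
    if p = ((2:Fin 3),(1:Fin 2)) then -l₁ else 0)
  have p23a := hpos.dotProduct_mulVec_nonneg (fun p => if p = ((1:Fin 3),(0:Fin 2)) then D₂₃ 0 0 else
    if p = ((2:Fin 3),(0:Fin 2)) then -l₂ else 0)
  have p23b := hpos.dotProduct_mulVec_nonneg (fun p => if p = ((1:Fin 3),(1:Fin 2)) then D₂₃ 1 1 else
    if p = ((2:Fin 3),(1:Fin 2)) then -l₂ else 0)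
  simp [dotProduct, Matrix.mulVec, Fintype.sum_prod_type, Fin.sum_univ_succ, threeModeCM,
    Matrix.one_apply, Matrix.transpose_apply, Prod.ext_iff, z12, z12', z13, z13', z23, z23']
    at p12a p12b p13a p13b p23a p23b
  have h0 : (0:ℝ) < l₁ := lt_of_lt_of_le one_pos h₁
  have h0' : (0:ℝ) < l₂ := lt_of_lt_of_le one_pos h₂
  -- squared bounds
  have q12a : (D₁₂ 0 0)^2 ≤ l₁ * l₂ := by nlinarith [p12a]
  have q12b : (D₁₂ 1 1)^2 ≤ l₁ * l₂ := by nlinarith [p12b]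
  have q13a : (D₁₃ 0 0)^2 ≤ l₁ * l₃ := by nlinarith [p13a]
  have q13b : (D₁₃ 1 1)^2 ≤ l₁ * l₃ := by nlinarith [p13b]
  have q23a : (D₂₃ 0 0)^2 ≤ l₂ * l₃ := by nlinarith [p23a]
  have q23b : (D₂₃ 1 1)^2 ≤ l₂ * l₃ := by nlinarith [p23b]
  have d12 : D₁₂ 0 0 * D₁₂ 1 1 ≤ l₁ * l₂ := by nlinarith [sq_nonneg (D₁₂ 0 0 - D₁₂ 1 1)]
  have d13 : D₁₃ 0 0 * D₁₃ 1 1 ≤ l₁ * l₃ := by nlinarith [sq_nonneg (D₁₃ 0 0 - D₁₃ 1 1)]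
  have d23 : D₂₃ 0 0 * D₂₃ 1 1 ≤ l₂ * l₃ := by nlinarith [sq_nonneg (D₂₃ 0 0 - D₂₃ 1 1)]
  clear hpure hpos hD₁₂ hD₁₃ hD₂₃ z12 z12' z13 z13' z23 z23' p12a p12b p13a p13b p23a p23b
  have aux : ∀ x y z : ℝ, 0 ≤ x → 0 ≤ y → 0 ≤ z → x^2 ≤ (y+z)^2 - 1 → x < y + z + 1 := by
    intro x y z hx hy hz h
    nlinarith [h, hx, hy, hz]
  have L1 : l₁^2 ≤ (l₂+l₃)^2 - 1 := by nlinarith [e1, e2, e3, d23]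
  have L2 : l₂^2 ≤ (l₁+l₃)^2 - 1 := by nlinarith [e1, e2, e3, d13]
  have L3 : l₃^2 ≤ (l₁+l₂)^2 - 1 := by nlinarith [e1, e2, e3, d12]
  exact ⟨aux l₁ l₂ l₃ (by linarith) (by linarith) (by linarith) L1,
         aux l₂ l₁ l₃ (by linarith) (by linarith) (by linarith) L2,
         aux l₃ l₁ l₂ (by linarith) (by linarith) (by linarith) L3⟩
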